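/- arXiv:2601.11056 — 2 statements merged into one kernel-verified Lean document; each statement's English description precedes it below -/
import Mathlib

section
/- Let E be a Banach space, X a Banach lattice, T : E → X a nonzero bounded linear operator, and let (Y₁, U₁, V₁) and (Y₂, U₂, V₂) be Class C factorizations of T. Then the following are equivalent: (a) there is a bounded linear map φ : Y₁ → Y₂ such that U₂ = φ∘U₁ and V₁ = V₂∘φ; (b) there is a positive constant c such that V₁(B_{Y₁}) ⊆ c·V₂(B_{Y₂}). Moreover, when (a) holds, φ is necessarily of Class C. -/
noncomputable section

open scoped Pointwise

/-- A map between lattices is a lattice homomorphism if it preserves binary suprema. -/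
def IsLatHom {X Y : Type*} [Lattice X] [Lattice Y] (f : X → Y) : Prop :=
  ∀ a b : X, f (a ⊔ b) = f a ⊔ f b

/-- A map is interval preserving if it maps order intervals `[0, x]` onto `[0, f x]`. -/
def IsIntervalPreserving {X Y : Type*} [Lattice X] [Zero X] [Lattice Y] [Zero Y]
    (f : X → Y) : Prop :=
  ∀ x : X, 0 ≤ x → f '' Set.Icc 0 x = Set.Icc 0 (f x)

/-- An operator `V : Y → X` between Banach lattices is of Class 𝒞 if it is an injective,
interval preserving lattice homomorphism whose image of the closed unit ball is closed. -/
def IsClassC {Y X : Type*} [NormedAddCommGroup Y] [Lattice Y] [HasSolidNorm Y]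
    [IsOrderedAddMonoid Y] [NormedSpace ℝ Y]
    [NormedAddCommGroup X] [Lattice X] [HasSolidNorm X] [IsOrderedAddMonoid X]
    [NormedSpace ℝ X] (V : Y →L[ℝ] X) : Prop :=
  Function.Injective ⇑V ∧ IsLatHom ⇑V ∧ IsIntervalPreserving ⇑V ∧
    IsClosed (⇑V '' Metric.closedBall 0 1)

/-- Comparison of two Class 𝒞 factorizations of a nonzero operator
`T : E → X`: a connecting operator `φ` exists iff the unit-ball images are comparable,
and such a `φ` is automatically of Class 𝒞. -/
theorem classC_factorization_comparison
    {E : Type*} [NormedAddCommGroup E] [NormedSpace ℝ E] [CompleteSpace E]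
    {X : Type*} [NormedAddCommGroup X] [Lattice X] [HasSolidNorm X]
    [IsOrderedAddMonoid X] [NormedSpace ℝ X] [PosSMulStrictMono ℝ X]
    [CompleteSpace X]
    {Y₁ : Type*} [NormedAddCommGroup Y₁] [Lattice Y₁] [HasSolidNorm Y₁]
    [IsOrderedAddMonoid Y₁] [NormedSpace ℝ Y₁] [PosSMulStrictMono ℝ Y₁]
    [CompleteSpace Y₁]
    {Y₂ : Type*} [NormedAddCommGroup Y₂] [Lattice Y₂] [HasSolidNorm Y₂]
    [IsOrderedAddMonoid Y₂] [NormedSpace ℝ Y₂] [PosSMulStrictMono ℝ Y₂]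
    [CompleteSpace Y₂]
    (T : E →L[ℝ] X) (hT : T ≠ 0)
    (U₁ : E →L[ℝ] Y₁) (V₁ : Y₁ →L[ℝ] X) (U₂ : E →L[ℝ] Y₂) (V₂ : Y₂ →L[ℝ] X)
    (h₁ : IsClassC V₁) (hf₁ : T = V₁.comp U₁)
    (h₂ : IsClassC V₂) (hf₂ : T = V₂.comp U₂) :
    ((∃ φ : Y₁ →L[ℝ] Y₂, U₂ = φ.comp U₁ ∧ V₁ = V₂.comp φ) ↔
      (∃ c > (0 : ℝ),
        ⇑V₁ '' Metric.closedBall 0 1 ⊆ c • (⇑V₂ '' Metric.closedBall 0 1))) ∧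
    (∀ φ : Y₁ →L[ℝ] Y₂, U₂ = φ.comp U₁ → V₁ = V₂.comp φ → IsClassC φ) := by
  obtain ⟨hV₁inj, hV₁lat, hV₁int, hV₁closed⟩ := h₁
  obtain ⟨hV₂inj, hV₂lat, hV₂int, hV₂closed⟩ := h₂
  constructor
  · constructor
    · rintro ⟨φ, hU, hV⟩
      refine ⟨‖φ‖ + 1, by positivity, ?_⟩
      rintro x ⟨y, hy, rfl⟩
      have hpos : (0:ℝ) < ‖φ‖ + 1 := by positivity
      refine ⟨V₂ ((‖φ‖ + 1)⁻¹ • φ y), ⟨(‖φ‖ + 1)⁻¹ • φ y, ?_, rfl⟩, ?_⟩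
      · rw [Metric.mem_closedBall, dist_zero_right, norm_smul]
        have h1 : ‖φ y‖ ≤ ‖φ‖ := by
          calc ‖φ y‖ ≤ ‖φ‖ * ‖y‖ := φ.le_opNorm y
          _ ≤ ‖φ‖ * 1 := by
            apply mul_le_mul_of_nonneg_left _ (norm_nonneg φ)
            simpa [dist_zero_right] using hy
          _ = ‖φ‖ := mul_one _
        rw [Real.norm_eq_abs, abs_of_pos (inv_pos.mpr hpos)]
        rw [inv_mul_le_iff₀ hpos, mul_one]
        linarith
      · show (‖φ‖ + 1) • V₂ ((‖φ‖ + 1)⁻¹ • φ y) = V₁ y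
        rw [← map_smul, smul_inv_smul₀ (ne_of_gt hpos)]
        rw [hV]; rfl
    · rintro ⟨c, hc, hsub⟩
      have key : ∀ y : Y₁, ∃ z : Y₂, V₂ z = V₁ y ∧ ‖z‖ ≤ c * ‖y‖ := by
        intro y
        rcases eq_or_ne y 0 with rfl | hy0
        · exact ⟨0, by simp, by simp⟩
        · have hny : (0:ℝ) < ‖y‖ := norm_pos_iff.mpr hy0
          have hmem : V₁ (‖y‖⁻¹ • y) ∈ c • (⇑V₂ '' Metric.closedBall 0 1) := by
            apply hsub
            refine ⟨‖y‖⁻¹ • y, ?_, rfl⟩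
            rw [Metric.mem_closedBall, dist_zero_right, norm_smul,
              Real.norm_eq_abs, abs_of_pos (inv_pos.mpr hny), inv_mul_cancel₀ (ne_of_gt hny)]
          obtain ⟨b, ⟨w, hw, rfl⟩, hb⟩ := hmem
          refine ⟨(c * ‖y‖) • w, ?_, ?_⟩
          · rw [map_smul]
            have : c • V₂ w = V₁ (‖y‖⁻¹ • y) := hb
            calc (c * ‖y‖) • V₂ w = ‖y‖ • (c • V₂ w) := by
                  rw [smul_smul, mul_comm]
            _ = ‖y‖ • V₁ (‖y‖⁻¹ • y) := by rw [this]
            _ = V₁ (‖y‖ • ‖y‖⁻¹ • y) := by rw [← map_smul]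
            _ = V₁ y := by rw [smul_inv_smul₀ (ne_of_gt hny)]
          · rw [norm_smul, Real.norm_eq_abs, abs_of_pos (by positivity)]
            have hw1 : ‖w‖ ≤ 1 := by simpa [dist_zero_right] using hw
            calc c * ‖y‖ * ‖w‖ ≤ c * ‖y‖ * 1 := by
                  apply mul_le_mul_of_nonneg_left hw1 (by positivity)
            _ = c * ‖y‖ := mul_one _
      set f : Y₁ → Y₂ := fun y => Classical.choose (key y) with hf
      have hfeq : ∀ y, V₂ (f y) = V₁ y := fun y => (Classical.choose_spec (key y)).1
      have hfbd : ∀ y, ‖f y‖ ≤ c * ‖y‖ := fun y => (Classical.choose_spec (key y)).2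
      have hadd : ∀ a b, f (a + b) = f a + f b := by
        intro a b
        apply hV₂inj
        rw [map_add, hfeq, hfeq, hfeq, map_add]
      have hsmul : ∀ (r : ℝ) a, f (r • a) = r • f a := by
        intro r a
        apply hV₂inj
        rw [map_smul, hfeq, hfeq, map_smul]
      let φ₀ : Y₁ →ₗ[ℝ] Y₂ :=
        { toFun := f, map_add' := hadd, map_smul' := hsmul }
      let φ : Y₁ →L[ℝ] Y₂ := φ₀.mkContinuous c hfbd
      have hφeq : ∀ y, V₂ (φ y) = V₁ y := hfeq
      refine ⟨φ, ?_, ?_⟩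
      · ext e
        apply hV₂inj
        show V₂ (U₂ e) = V₂ (φ (U₁ e))
        rw [hφeq]
        have h1 : V₂ (U₂ e) = T e := by rw [hf₂]; rfl
        have h2 : V₁ (U₁ e) = T e := by rw [hf₁]; rfl
        rw [h1, h2]
      · ext y
        exact (hφeq y).symm
  · intro φ hU hV
    have hφeq : ∀ y, V₂ (φ y) = V₁ y := by
      intro y; rw [hV]; rfl
    have hφinj : Function.Injective ⇑φ := by
      intro a b h
      apply hV₁inj
      rw [← hφeq, ← hφeq, h]
    have hφlat : IsLatHom ⇑φ := by
      intro a b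
      apply hV₂inj
      rw [hφeq, hV₂lat, hφeq, hφeq, hV₁lat]
    have hφmono : Monotone ⇑φ := by
      intro a b hab
      have : φ b = φ a ⊔ φ b := by rw [← hφlat, sup_eq_right.mpr hab]
      rw [this]; exact le_sup_left
    have hV₂mono : Monotone ⇑V₂ := by
      intro a b hab
      have : V₂ b = V₂ a ⊔ V₂ b := by rw [← hV₂lat, sup_eq_right.mpr hab]
      rw [this]; exact le_sup_left
    refine ⟨hφinj, hφlat, ?_, ?_⟩
    · intro x hx
      apply Set.Subset.antisymm
      · rintro z ⟨w, ⟨hw0, hwx⟩, rfl⟩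
        exact ⟨by simpa using hφmono hw0, hφmono hwx⟩
      · rintro z ⟨hz0, hzx⟩
        have hmem : V₂ z ∈ Set.Icc 0 (V₁ x) := by
          constructor
          · simpa using hV₂mono hz0
          · rw [← hφeq]; exact hV₂mono hzx
        rw [← hV₁int x hx] at hmem
        obtain ⟨w, hw, hVw⟩ := hmem
        exact ⟨w, hw, hV₂inj (by rw [hφeq, hVw])⟩
    · have hset : ⇑φ '' Metric.closedBall 0 1 = ⇑V₂ ⁻¹' (⇑V₁ '' Metric.closedBall 0 1) := by
        ext z
        constructor
        · rintro ⟨y, hy, rfl⟩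
          exact ⟨y, hy, (hφeq y).symm⟩
        · rintro ⟨y, hy, h⟩
          exact ⟨y, hy, hV₂inj (by rw [hφeq, h])⟩
      rw [hset]
      exact hV₁closed.preimage V₂.continuous

end
end

section
/- Let X be a Banach lattice, E a Banach space, and T : X → E a nonzero bounded linear operator. (i) If (Y, U, V) is a Class D factorization of T, then U⁻¹(B_Y) is a closed, convex, solid subset of X satisfying c⁻¹·B_X ⊆ U⁻¹(B_Y) ⊆ c·T⁻¹(B_E) for some c ≥ 1. (ii) Conversely, for every closed, convex, solid subset S of X satisfying c⁻¹·B_X ⊆ S ⊆ c·T⁻¹(B_E) for some c ≥ 1, there exists a Class D factorization (Y, U, V) of T with U⁻¹(B_Y) = S. (iii) If (Y₁, U₁, V₁) and (Y₂, U₂, V₂) are Class D factorizations of T with U₁⁻¹(B_{Y₁}) = U₂⁻¹(B_{Y₂}), then there exists a surjective lattice isometry ι : Y₁ → Y₂ with U₂ = ι∘U₁ and V₁ = V₂∘ι. -/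
/-- Bundled Banach lattice: a complete normed lattice (solid norm, order-compatible
vector space structure over `ℝ`). -/
structure BanachLat where
  carrier : Type
  [nag : NormedAddCommGroup carrier]
  [lat : Lattice carrier]
  [hsn : HasSolidNorm carrier]
  [ioam : IsOrderedAddMonoid carrier]
  [nsp : NormedSpace ℝ carrier]
  [osm : PosSMulStrictMono ℝ carrier]
  [cs : CompleteSpace carrier]

attribute [instance] BanachLat.nag BanachLat.lat BanachLat.hsn BanachLat.ioam BanachLat.nsp BanachLat.osm BanachLat.cs

instance : CoeSort BanachLat Type := ⟨BanachLat.carrier⟩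

noncomputable section

open scoped Pointwise

/-- An operator `U : X → Y` between Banach lattices is of Class 𝒟 if it is a lattice
homomorphism with dense range. -/
def IsClassD {X Y : Type*} [NormedAddCommGroup X] [Lattice X] [HasSolidNorm X]
    [IsOrderedAddMonoid X] [NormedSpace ℝ X]
    [NormedAddCommGroup Y] [Lattice Y] [HasSolidNorm Y]
    [IsOrderedAddMonoid Y] [NormedSpace ℝ Y] (U : X →L[ℝ] Y) : Prop :=
  IsLatHom ⇑U ∧ DenseRange ⇑U

/-- A subset of a Banach lattice is solid if `|u| ≤ |v|` and `v ∈ s` imply `u ∈ s`. -/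
def IsSolid {X : Type*} [Lattice X] [AddCommGroup X] (s : Set X) : Prop :=
  ∀ ⦃u v : X⦄, |u| ≤ |v| → v ∈ s → u ∈ s

set_option synthInstance.maxHeartbeats 1000000
set_option maxHeartbeats 2000000

open UniformSpace

/-! ### Lattice algebra helpers -/

section Helpers
variable {X : Type*} [NormedAddCommGroup X] [Lattice X] [HasSolidNorm X] [IsOrderedAddMonoid X] [NormedSpace ℝ X] [PosSMulStrictMono ℝ X]

lemma rsmul_sup {c : ℝ} (hc : 0 < c) (a b : X) : c • (a ⊔ b) = c • a ⊔ c • b := by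
  refine le_antisymm ?_ (sup_le (smul_le_smul_of_nonneg_left le_sup_left hc.le)
    (smul_le_smul_of_nonneg_left le_sup_right hc.le))
  have h : a ⊔ b ≤ c⁻¹ • (c • a ⊔ c • b) := by
    refine sup_le ?_ ?_
    · calc a = c⁻¹ • (c • a) := (inv_smul_smul₀ hc.ne' a).symm
        _ ≤ _ := smul_le_smul_of_nonneg_left le_sup_left (by positivity)
    · calc b = c⁻¹ • (c • b) := (inv_smul_smul₀ hc.ne' b).symm
        _ ≤ _ := smul_le_smul_of_nonneg_left le_sup_right (by positivity)
  calc c • (a ⊔ b) ≤ c • (c⁻¹ • (c • a ⊔ c • b)) := smul_le_smul_of_nonneg_left h hc.le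
    _ = c • a ⊔ c • b := smul_inv_smul₀ hc.ne' _

lemma rabs_smul {c : ℝ} (hc : 0 ≤ c) (x : X) : |c • x| = c • |x| := by
  rcases hc.eq_or_lt with h | h
  · simp [← h]
  · show (c • x) ⊔ -(c • x) = c • (x ⊔ -x)
    rw [rsmul_sup h, smul_neg]

lemma rabs_smul' (c : ℝ) (x : X) : |c • x| = |c| • |x| := by
  rcases le_or_gt 0 c with h | h
  · rw [rabs_smul h, abs_of_nonneg h]
  · rw [abs_of_neg h, ← rabs_smul (neg_nonneg.2 h.le) x, neg_smul, abs_neg]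

omit [NormedSpace ℝ X] [PosSMulStrictMono ℝ X] in
lemma abs_sup_sub_sup_le (a b c d : X) : |a ⊔ b - (c ⊔ d)| ≤ |a - c| + |b - d| := by
  calc |a ⊔ b - (c ⊔ d)| ≤ |a ⊔ b - (c ⊔ b)| + |c ⊔ b - (c ⊔ d)| := by
        simpa using abs_add_le (a ⊔ b - (c ⊔ b)) (c ⊔ b - (c ⊔ d))
    _ ≤ |a - c| + |b - d| := by
        refine add_le_add (abs_sup_sub_sup_le_abs a c b) ?_
        rw [sup_comm c b, sup_comm c d]
        exact abs_sup_sub_sup_le_abs b d c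

omit [NormedSpace ℝ X] [PosSMulStrictMono ℝ X] in
lemma abs_inf_sub_inf_le (a b c d : X) : |a ⊓ b - (c ⊓ d)| ≤ |a - c| + |b - d| := by
  calc |a ⊓ b - (c ⊓ d)| ≤ |a ⊓ b - (c ⊓ b)| + |c ⊓ b - (c ⊓ d)| := by
        simpa using abs_add_le (a ⊓ b - (c ⊓ b)) (c ⊓ b - (c ⊓ d))
    _ ≤ |a - c| + |b - d| := by
        refine add_le_add (abs_inf_sub_inf_le_abs a c b) ?_
        rw [inf_comm c b, inf_comm c d]
        exact abs_inf_sub_inf_le_abs b d c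

end Helpers

/-! ### The seminormed lattice associated to a solid continuous seminorm -/

/-- A solid continuous seminorm on a Banach lattice. -/
structure LatSeminorm (X : Type) [NormedAddCommGroup X] [Lattice X] [HasSolidNorm X] [IsOrderedAddMonoid X] [NormedSpace ℝ X] where
  p : Seminorm ℝ X
  solid' : ∀ u v : X, |u| ≤ |v| → p u ≤ p v
  c : ℝ
  hc : 0 < c
  bound : ∀ x : X, p x ≤ c * ‖x‖

variable {X : Type} [NormedAddCommGroup X] [Lattice X] [HasSolidNorm X] [IsOrderedAddMonoid X] [NormedSpace ℝ X] [PosSMulStrictMono ℝ X]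

/-- Type synonym: `X` equipped with the seminorm `q.p`. -/
@[nolint unusedArguments]
def PreSp {X : Type} [NormedAddCommGroup X] [Lattice X] [HasSolidNorm X] [IsOrderedAddMonoid X] [NormedSpace ℝ X]
    (_q : LatSeminorm X) : Type := X

namespace PreSp
variable (q : LatSeminorm X)

def mk : X ≃ PreSp q := Equiv.refl X

instance : SeminormedAddCommGroup (PreSp q) :=
  q.p.toAddGroupSeminorm.toSeminormedAddCommGroup
instance : Module ℝ (PreSp q) := inferInstanceAs (Module ℝ X)
instance : Lattice (PreSp q) := inferInstanceAs (Lattice X)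
instance : AddLeftMono (PreSp q) := inferInstanceAs (AddLeftMono X)
instance : AddRightMono (PreSp q) := inferInstanceAs (AddRightMono X)

omit [PosSMulStrictMono ℝ X] in
lemma norm_def (x : PreSp q) : ‖x‖ = q.p ((mk q).symm x) := rfl

instance : NormedSpace ℝ (PreSp q) where
  norm_smul_le a x := by
    rw [norm_def, norm_def]
    exact (map_smul_eq_mul q.p a _).le

omit [PosSMulStrictMono ℝ X] in
lemma psolid {u v : PreSp q} (h : |u| ≤ |v|) : ‖u‖ ≤ ‖v‖ := q.solid' _ _ h

omit [PosSMulStrictMono ℝ X] in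
lemma pabs (u : PreSp q) : ‖|u|‖ = ‖u‖ :=
  le_antisymm (psolid q (by rw [abs_abs])) (psolid q (by rw [abs_abs]))

omit [PosSMulStrictMono ℝ X] in
lemma lip_est (a b c d : PreSp q) : ‖a ⊔ b - (c ⊔ d)‖ ≤ ‖a - c‖ + ‖b - d‖ := by
  calc ‖a ⊔ b - (c ⊔ d)‖ ≤ ‖|a - c| + |b - d|‖ := by
        refine psolid q ?_
        have h0 : (0 : PreSp q) ≤ |a - c| + |b - d| := add_nonneg (abs_nonneg _) (abs_nonneg _)
        rw [abs_of_nonneg h0]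
        exact abs_sup_sub_sup_le (X := X) a b c d
    _ ≤ ‖|a - c|‖ + ‖|b - d|‖ := norm_add_le _ _
    _ = ‖a - c‖ + ‖b - d‖ := by rw [pabs, pabs]

omit [PosSMulStrictMono ℝ X] in
lemma lip_est_inf (a b c d : PreSp q) : ‖a ⊓ b - (c ⊓ d)‖ ≤ ‖a - c‖ + ‖b - d‖ := by
  calc ‖a ⊓ b - (c ⊓ d)‖ ≤ ‖|a - c| + |b - d|‖ := by
        refine psolid q ?_
        have h0 : (0 : PreSp q) ≤ |a - c| + |b - d| := add_nonneg (abs_nonneg _) (abs_nonneg _)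
        rw [abs_of_nonneg h0]
        exact abs_inf_sub_inf_le (X := X) a b c d
    _ ≤ ‖|a - c|‖ + ‖|b - d|‖ := norm_add_le _ _
    _ = ‖a - c‖ + ‖b - d‖ := by rw [pabs, pabs]

omit [PosSMulStrictMono ℝ X] in
lemma uc_sup : UniformContinuous₂ (fun a b : PreSp q => a ⊔ b) := by
  rw [UniformContinuous₂]
  have : LipschitzWith 2 (fun ab : PreSp q × PreSp q => ab.1 ⊔ ab.2) := by
    refine LipschitzWith.of_dist_le_mul fun x y => ?_
    rw [dist_eq_norm]
    calc ‖x.1 ⊔ x.2 - (y.1 ⊔ y.2)‖ ≤ ‖x.1 - y.1‖ + ‖x.2 - y.2‖ := lip_est q _ _ _ _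
      _ ≤ dist x y + dist x y := by
          rw [← dist_eq_norm, ← dist_eq_norm]
          exact add_le_add (le_max_left _ _) (le_max_right _ _)
      _ = 2 * dist x y := by ring
  exact this.uniformContinuous

omit [PosSMulStrictMono ℝ X] in
lemma uc_inf : UniformContinuous₂ (fun a b : PreSp q => a ⊓ b) := by
  rw [UniformContinuous₂]
  have : LipschitzWith 2 (fun ab : PreSp q × PreSp q => ab.1 ⊓ ab.2) := by
    refine LipschitzWith.of_dist_le_mul fun x y => ?_
    rw [dist_eq_norm]
    calc ‖x.1 ⊓ x.2 - (y.1 ⊓ y.2)‖ ≤ ‖x.1 - y.1‖ + ‖x.2 - y.2‖ := lip_est_inf q _ _ _ _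
      _ ≤ dist x y + dist x y := by
          rw [← dist_eq_norm, ← dist_eq_norm]
          exact add_le_add (le_max_left _ _) (le_max_right _ _)
      _ = 2 * dist x y := by ring
  exact this.uniformContinuous

/-- `X → PreSp q` as a continuous linear map. -/
def mkCLM : X →L[ℝ] PreSp q :=
  LinearMap.mkContinuous
    { toFun := mk q
      map_add' := fun _ _ => rfl
      map_smul' := fun _ _ => rfl } q.c (fun x => q.bound x)

omit [PosSMulStrictMono ℝ X] in
lemma mkCLM_apply (x : X) : mkCLM q x = mk q x := rfl

omit [PosSMulStrictMono ℝ X] in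
lemma mkCLM_surj : Function.Surjective (mkCLM q) := (mk q).surjective

end PreSp

/-! ### Banach lattice structure on the completion -/

namespace CSp
open UniformSpace.Completion PreSp
variable (q : LatSeminorm X)

instance : Max (Completion (PreSp q)) := ⟨Completion.map₂ (· ⊔ ·)⟩
instance : Min (Completion (PreSp q)) := ⟨Completion.map₂ (· ⊓ ·)⟩

omit [PosSMulStrictMono ℝ X] in
lemma coe_sup (x y : PreSp q) :
    ((x ⊔ y : PreSp q) : Completion (PreSp q)) = ↑x ⊔ ↑y :=
  (map₂_coe_coe x y _ (uc_sup q)).symm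

omit [PosSMulStrictMono ℝ X] in
lemma coe_inf (x y : PreSp q) :
    ((x ⊓ y : PreSp q) : Completion (PreSp q)) = ↑x ⊓ ↑y :=
  (map₂_coe_coe x y _ (uc_inf q)).symm

variable {q}

omit [PosSMulStrictMono ℝ X] in
lemma continuous_sup₂ {δ : Type*} [TopologicalSpace δ]
    {f g : δ → Completion (PreSp q)} (hf : Continuous f) (hg : Continuous g) :
    Continuous (fun d => f d ⊔ g d) :=
  Completion.continuous_map₂ hf hg

omit [PosSMulStrictMono ℝ X] in
lemma continuous_inf₂ {δ : Type*} [TopologicalSpace δ]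
    {f g : δ → Completion (PreSp q)} (hf : Continuous f) (hg : Continuous g) :
    Continuous (fun d => f d ⊓ g d) :=
  Completion.continuous_map₂ hf hg

variable (q)

omit [PosSMulStrictMono ℝ X] in
lemma csup_comm (a b : Completion (PreSp q)) : a ⊔ b = b ⊔ a := by
  refine Completion.induction_on₂ a b
    (isClosed_eq (continuous_sup₂ continuous_fst continuous_snd)
      (continuous_sup₂ continuous_snd continuous_fst)) fun x y => ?_
  rw [← coe_sup, ← coe_sup, sup_comm]

omit [PosSMulStrictMono ℝ X] in
lemma csup_assoc (a b c : Completion (PreSp q)) : a ⊔ b ⊔ c = a ⊔ (b ⊔ c) := by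
  refine Completion.induction_on₃ a b c
    (isClosed_eq
      (continuous_sup₂ (continuous_sup₂ continuous_fst (continuous_fst.comp continuous_snd))
        ((continuous_snd.comp continuous_snd)))
      (continuous_sup₂ continuous_fst
        (continuous_sup₂ (continuous_fst.comp continuous_snd)
          (continuous_snd.comp continuous_snd)))) fun x y z => ?_
  rw [← coe_sup, ← coe_sup, ← coe_sup, ← coe_sup, sup_assoc]

omit [PosSMulStrictMono ℝ X] in
lemma cinf_comm (a b : Completion (PreSp q)) : a ⊓ b = b ⊓ a := by
  refine Completion.induction_on₂ a b
    (isClosed_eq (continuous_inf₂ continuous_fst continuous_snd)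
      (continuous_inf₂ continuous_snd continuous_fst)) fun x y => ?_
  rw [← coe_inf, ← coe_inf, inf_comm]

omit [PosSMulStrictMono ℝ X] in
lemma cinf_assoc (a b c : Completion (PreSp q)) : a ⊓ b ⊓ c = a ⊓ (b ⊓ c) := by
  refine Completion.induction_on₃ a b c
    (isClosed_eq
      (continuous_inf₂ (continuous_inf₂ continuous_fst (continuous_fst.comp continuous_snd))
        ((continuous_snd.comp continuous_snd)))
      (continuous_inf₂ continuous_fst
        (continuous_inf₂ (continuous_fst.comp continuous_snd)
          (continuous_snd.comp continuous_snd)))) fun x y z => ?_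
  rw [← coe_inf, ← coe_inf, ← coe_inf, ← coe_inf, inf_assoc]

omit [PosSMulStrictMono ℝ X] in
lemma cabsorb₁ (a b : Completion (PreSp q)) : a ⊔ a ⊓ b = a := by
  refine Completion.induction_on₂ a b
    (isClosed_eq (continuous_sup₂ continuous_fst (continuous_inf₂ continuous_fst continuous_snd))
      continuous_fst) fun x y => ?_
  rw [← coe_inf, ← coe_sup, sup_inf_self]

omit [PosSMulStrictMono ℝ X] in
lemma cabsorb₂ (a b : Completion (PreSp q)) : a ⊓ (a ⊔ b) = a := by
  refine Completion.induction_on₂ a b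
    (isClosed_eq (continuous_inf₂ continuous_fst (continuous_sup₂ continuous_fst continuous_snd))
      continuous_fst) fun x y => ?_
  rw [← coe_sup, ← coe_inf, inf_sup_self]

instance : Lattice (Completion (PreSp q)) :=
  Lattice.mk' (csup_comm q) (csup_assoc q) (cinf_comm q) (cinf_assoc q)
    (cabsorb₁ q) (cabsorb₂ q)

omit [PosSMulStrictMono ℝ X] in
lemma cle_iff (a b : Completion (PreSp q)) : a ≤ b ↔ a ⊔ b = b := sup_eq_right.symm

omit [PosSMulStrictMono ℝ X] in
lemma cadd_sup (a b c : Completion (PreSp q)) : (c + a) ⊔ (c + b) = c + (a ⊔ b) := by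
  refine Completion.induction_on₃ a b c
    (isClosed_eq
      (continuous_sup₂
        ((continuous_snd.comp continuous_snd).add continuous_fst)
        ((continuous_snd.comp continuous_snd).add (continuous_fst.comp continuous_snd)))
      ((continuous_snd.comp continuous_snd).add
        (continuous_sup₂ continuous_fst (continuous_fst.comp continuous_snd))))
    fun x y z => ?_
  rw [← Completion.coe_add, ← Completion.coe_add, ← coe_sup, ← coe_sup, ← Completion.coe_add]
  congr 1
  rw [add_comm z x, add_comm z y, ← sup_add, add_comm]

omit [PosSMulStrictMono ℝ X] in
lemma coe_abs (x : PreSp q) :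
    ((|x| : PreSp q) : Completion (PreSp q)) = |(x : Completion (PreSp q))| := by
  show ((x ⊔ -x : PreSp q) : Completion (PreSp q)) = _ ⊔ -_
  rw [coe_sup, Completion.coe_neg]

omit [PosSMulStrictMono ℝ X] in
lemma cnorm_abs (a : Completion (PreSp q)) : ‖|a|‖ = ‖a‖ := by
  refine Completion.induction_on a
    (isClosed_eq (continuous_norm.comp (continuous_sup₂ continuous_id continuous_id.neg))
      continuous_norm) fun x => ?_
  rw [← coe_abs, Completion.norm_coe, Completion.norm_coe, pabs]

omit [PosSMulStrictMono ℝ X] in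
lemma cnorm_inf_abs (a b : Completion (PreSp q)) : ‖|a| ⊓ |b|‖ ≤ ‖b‖ := by
  refine Completion.induction_on₂ a b
    (isClosed_le (continuous_norm.comp
        (continuous_inf₂
          (continuous_sup₂ continuous_fst continuous_fst.neg)
          (continuous_sup₂ continuous_snd continuous_snd.neg)))
      (continuous_norm.comp continuous_snd)) fun x y => ?_
  rw [← coe_abs, ← coe_abs, ← coe_inf, Completion.norm_coe, Completion.norm_coe]
  have h0 : (0 : PreSp q) ≤ |x| ⊓ |y| := le_inf (abs_nonneg _) (abs_nonneg _)
  calc ‖|x| ⊓ |y|‖ ≤ ‖|y|‖ := psolid q (by rw [abs_of_nonneg h0, abs_abs]; exact inf_le_right)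
    _ = ‖y‖ := pabs q _

instance : HasSolidNorm (Completion (PreSp q)) := by
  refine ⟨fun a b h => ?_⟩
  have h1 : |a| ⊓ |b| = |a| := inf_eq_left.2 h
  calc ‖a‖ = ‖|a|‖ := (cnorm_abs q a).symm
    _ = ‖|a| ⊓ |b|‖ := by rw [h1]
    _ ≤ ‖b‖ := cnorm_inf_abs q a b

instance : IsOrderedAddMonoid (Completion (PreSp q)) where
  add_le_add_left a b h c := by
    rw [add_comm a c, add_comm b c]
    rw [cle_iff] at h ⊢
    rw [cadd_sup, h]

lemma csmul_sup {c : ℝ} (hc : 0 < c) (a b : Completion (PreSp q)) :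
    c • (a ⊔ b) = c • a ⊔ c • b := by
  refine Completion.induction_on₂ a b
    (isClosed_eq ((continuous_sup₂ continuous_fst continuous_snd).const_smul c)
      (continuous_sup₂ (continuous_fst.const_smul c) (continuous_snd.const_smul c)))
    fun x y => ?_
  rw [← coe_sup, ← Completion.coe_smul, ← Completion.coe_smul, ← Completion.coe_smul, ← coe_sup]
  congr 1
  exact rsmul_sup (X := X) hc x y

instance : PosSMulStrictMono ℝ (Completion (PreSp q)) := by
  refine ⟨fun c hc a b hab => ?_⟩
  have hab' := hab.le
  rw [cle_iff] at hab'
  refine lt_of_le_of_ne ?_ ?_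
  · rw [cle_iff, ← csmul_sup q hc, hab']
  · intro h
    exact hab.ne (smul_right_injective _ hc.ne' h)

/-- Canonical map `X → Completion (PreSp q)`. -/
def canon : X →L[ℝ] Completion (PreSp q) :=
  (toComplL : PreSp q →L[ℝ] Completion (PreSp q)).comp (mkCLM q)

omit [PosSMulStrictMono ℝ X] in
lemma canon_apply (x : X) : canon q x = (mk q x : PreSp q) := rfl

omit [PosSMulStrictMono ℝ X] in
lemma canon_denseRange : DenseRange (canon q) := by
  have h1 : DenseRange ((↑) : PreSp q → Completion (PreSp q)) := Completion.denseRange_coe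
  have h2 : DenseRange (mkCLM q) := (mkCLM_surj q).denseRange
  exact h1.comp h2 (Completion.continuous_coe (PreSp q))

omit [PosSMulStrictMono ℝ X] in
lemma canon_norm (x : X) : ‖canon q x‖ = q.p x := by
  rw [canon_apply, Completion.norm_coe]; rfl

omit [PosSMulStrictMono ℝ X] in
lemma canon_latHom : IsLatHom (canon q) := by
  intro a b
  rw [canon_apply, canon_apply, canon_apply]
  exact coe_sup q (mk q a) (mk q b)

/-- Extension of a continuous linear map on `PreSp q` to the completion. -/
def extCLM {F : Type*} [NormedAddCommGroup F] [NormedSpace ℝ F] [CompleteSpace F]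
    (f : PreSp q →L[ℝ] F) : Completion (PreSp q) →L[ℝ] F where
  toFun := Completion.extension f
  map_add' a b := by
    refine Completion.induction_on₂ a b
      (isClosed_eq (Completion.continuous_extension.comp continuous_add)
        ((Completion.continuous_extension.comp continuous_fst).add
          (Completion.continuous_extension.comp continuous_snd))) fun x y => ?_
    rw [← Completion.coe_add, Completion.extension_coe f.uniformContinuous,
      Completion.extension_coe f.uniformContinuous,
      Completion.extension_coe f.uniformContinuous, map_add]
  map_smul' c a := by
    refine Completion.induction_on a
      (isClosed_eq (Completion.continuous_extension.comp (continuous_const_smul c))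
        ((Completion.continuous_extension).const_smul c)) fun x => ?_
    show Completion.extension ⇑f (c • (x : Completion (PreSp q))) =
      (RingHom.id ℝ) c • Completion.extension ⇑f ↑x
    rw [← Completion.coe_smul, Completion.extension_coe f.uniformContinuous,
      Completion.extension_coe f.uniformContinuous]
    simp
  cont := Completion.continuous_extension

omit [PosSMulStrictMono ℝ X] in
lemma extCLM_coe {F : Type*} [NormedAddCommGroup F] [NormedSpace ℝ F] [CompleteSpace F]
    (f : PreSp q →L[ℝ] F) (x : PreSp q) : extCLM q f ↑x = f x :=
  Completion.extension_coe f.uniformContinuous x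

end CSp

/-! ### Gauge of a closed convex solid set -/

section Gauge
variable {S : Set X} {c : ℝ}

lemma mem_of_small (hc : 1 ≤ c) (hball : c⁻¹ • Metric.closedBall (0 : X) 1 ⊆ S)
    {z : X} (hz : ‖z‖ ≤ c⁻¹) : z ∈ S := by
  have hc0 : (0 : ℝ) < c := lt_of_lt_of_le one_pos hc
  apply hball
  refine ⟨c • z, ?_, by simp [inv_smul_smul₀ hc0.ne']⟩
  rw [Metric.mem_closedBall, dist_zero_right, norm_smul, Real.norm_eq_abs, abs_of_pos hc0]
  calc c * ‖z‖ ≤ c * c⁻¹ := by nlinarith [norm_nonneg z]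
    _ = 1 := mul_inv_cancel₀ hc0.ne'

lemma S_mem_nhds (hc : 1 ≤ c) (hball : c⁻¹ • Metric.closedBall (0 : X) 1 ⊆ S) :
    S ∈ nhds (0 : X) := by
  have hc0 : (0 : ℝ) < c := lt_of_lt_of_le one_pos hc
  refine Filter.mem_of_superset (Metric.closedBall_mem_nhds (0 : X) (by positivity :
    (0:ℝ) < c⁻¹)) ?_
  intro z hz
  exact mem_of_small hc hball (by rwa [Metric.mem_closedBall, dist_zero_right] at hz)

lemma balanced_of_solid (hSol : IsSolid S) : Balanced ℝ S := by
  intro r hr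
  rintro x ⟨y, hy, rfl⟩
  refine hSol ?_ hy
  rw [rabs_smul' r y]
  have h1 : |r| • |y| ≤ (1:ℝ) • |y| := by
    rw [← sub_nonneg, ← sub_smul]
    exact smul_nonneg (by simpa using hr) (abs_nonneg y)
  calc |r| • |y| ≤ (1:ℝ) • |y| := h1
    _ = |y| := one_smul ℝ _

lemma smul_solid (hSol : IsSolid S) {t : ℝ} (ht : 0 < t) {u v : X}
    (h : |u| ≤ |v|) (hv : v ∈ t • S) : u ∈ t • S := by
  obtain ⟨y, hy, rfl⟩ := hv
  refine ⟨t⁻¹ • u, hSol ?_ hy, smul_inv_smul₀ ht.ne' u⟩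
  rw [rabs_smul' t⁻¹ u, abs_of_pos (by positivity : (0:ℝ) < t⁻¹)]
  calc t⁻¹ • |u| ≤ t⁻¹ • |t • y| := smul_le_smul_of_nonneg_left h (by positivity)
    _ = t⁻¹ • (t • |y|) := by rw [rabs_smul ht.le]
    _ = |y| := inv_smul_smul₀ ht.ne' _

lemma gauge_solid (hSol : IsSolid S) (habs : Absorbent ℝ S) {u v : X}
    (h : |u| ≤ |v|) : gauge S u ≤ gauge S v := by
  refine le_of_forall_pos_le_add fun ε hε => ?_
  obtain ⟨r, hr0, hrlt, hvr⟩ :=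
    exists_lt_of_gauge_lt habs (lt_add_of_pos_right (gauge S v) hε)
  exact le_trans (gauge_le_of_mem hr0.le (smul_solid hSol hr0 h hvr)) hrlt.le

lemma gauge_bound (hc : 1 ≤ c) (hball : c⁻¹ • Metric.closedBall (0 : X) 1 ⊆ S)
    (x : X) : gauge S x ≤ c * ‖x‖ := by
  have hc0 : (0 : ℝ) < c := lt_of_lt_of_le one_pos hc
  rcases eq_or_ne x 0 with rfl | hx
  · simp [gauge_zero]
  · have hnx : (0:ℝ) < ‖x‖ := norm_pos_iff.2 hx
    refine gauge_le_of_mem (by positivity) ?_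
    refine ⟨(c * ‖x‖)⁻¹ • x, mem_of_small hc hball ?_, smul_inv_smul₀ (by positivity) x⟩
    rw [norm_smul, Real.norm_eq_abs, abs_of_pos (by positivity)]
    rw [mul_inv, mul_assoc, inv_mul_cancel₀ hnx.ne']
    simp

/-- The unit ball of the gauge is `S`. -/
lemma gauge_ball_eq (hScl : IsClosed S) (hConv : Convex ℝ S)
    (hc : 1 ≤ c) (hball : c⁻¹ • Metric.closedBall (0 : X) 1 ⊆ S) :
    {x : X | gauge S x ≤ 1} = S := by
  ext x
  constructor
  · intro hx
    have := (gauge_le_one_iff_mem_closure hConv (S_mem_nhds hc hball)).1 hx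
    rwa [hScl.closure_eq] at this
  · exact fun hx => gauge_le_one_of_mem hx

lemma opnorm_le_gauge {E : Type} [NormedAddCommGroup E] [NormedSpace ℝ E]
    (T : X →L[ℝ] E) (habs : Absorbent ℝ S)
    (hsub : S ⊆ c • (⇑T ⁻¹' Metric.closedBall 0 1)) (hc : 1 ≤ c) (x : X) :
    ‖T x‖ ≤ c * gauge S x := by
  have hc0 : (0 : ℝ) < c := lt_of_lt_of_le one_pos hc
  refine le_of_forall_pos_le_add fun ε hε => ?_
  obtain ⟨r, hr0, hrlt, y, hy, hxy⟩ :=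
    exists_lt_of_gauge_lt habs
      (lt_add_of_pos_right (gauge S x) (by positivity : (0:ℝ) < ε / c))
  obtain ⟨z, hz, hyz⟩ := hsub hy
  have hTy : ‖T y‖ ≤ c := by
    have : T y = c • T z := by
      rw [show y = c • z from hyz.symm, map_smul]
    rw [this, norm_smul, Real.norm_eq_abs, abs_of_pos hc0]
    have : ‖T z‖ ≤ 1 := by
      simpa [Metric.mem_closedBall, dist_zero_right] using hz
    nlinarith
  have hTx : T x = r • T y := by
    rw [show x = r • y from hxy.symm, map_smul]
  rw [hTx, norm_smul, Real.norm_eq_abs, abs_of_pos hr0]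
  calc r * ‖T y‖ ≤ r * c := by nlinarith [norm_nonneg (T y)]
    _ ≤ (gauge S x + ε / c) * c := by nlinarith
    _ = c * gauge S x + ε := by field_simp

/-- If the preimage of the unit ball of `U` is `S`, then `‖U x‖` is the gauge of `S`. -/
lemma norm_eq_gauge {Y' : Type*} [NormedAddCommGroup Y'] [NormedSpace ℝ Y']
    (U : X →L[ℝ] Y') (habs : Absorbent ℝ S)
    (hU : ⇑U ⁻¹' Metric.closedBall 0 1 = S) (x : X) :
    ‖U x‖ = gauge S x := by
  have hmem : ∀ z : X, z ∈ S ↔ ‖U z‖ ≤ 1 := by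
    intro z
    rw [← hU]
    simp [Metric.mem_closedBall, dist_zero_right]
  refine le_antisymm ?_ ?_
  · refine le_of_forall_pos_le_add fun ε hε => ?_
    obtain ⟨r, hr0, hrlt, y, hy, hxy⟩ :=
      exists_lt_of_gauge_lt habs (lt_add_of_pos_right (gauge S x) hε)
    have hy1 : ‖U y‖ ≤ 1 := (hmem y).1 hy
    have hUx : ‖U x‖ = r * ‖U y‖ := by
      rw [show x = r • y from hxy.symm, map_smul, norm_smul, Real.norm_eq_abs, abs_of_pos hr0]
    rw [hUx]
    nlinarith
  · refine le_of_forall_pos_le_add fun ε hε => ?_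
    have ht0 : (0:ℝ) < ‖U x‖ + ε := by positivity
    have hmem2 : (‖U x‖ + ε)⁻¹ • x ∈ S := by
      rw [hmem, map_smul, norm_smul, Real.norm_eq_abs, abs_of_pos (by positivity)]
      rw [inv_mul_le_iff₀ ht0, mul_one]
      linarith
    exact gauge_le_of_mem ht0.le ⟨(‖U x‖ + ε)⁻¹ • x, hmem2, smul_inv_smul₀ ht0.ne' x⟩

end Gauge

/-! ### Lattice homomorphism helpers -/

section LatHom
variable {Y' : Type*} [NormedAddCommGroup Y'] [Lattice Y'] [HasSolidNorm Y'] [IsOrderedAddMonoid Y'] [NormedSpace ℝ Y']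

omit [PosSMulStrictMono ℝ X] in
lemma latHom_mono (U : X →L[ℝ] Y') (hU : IsLatHom ⇑U) {a b : X} (h : a ≤ b) : U a ≤ U b := by
  rw [← sup_eq_right] at h ⊢
  rw [← hU, h]

omit [PosSMulStrictMono ℝ X] in
lemma latHom_abs (U : X →L[ℝ] Y') (hU : IsLatHom ⇑U) (x : X) : |U x| = U |x| := by
  show U x ⊔ -(U x) = U (x ⊔ -x)
  rw [hU, map_neg]

end LatHom

/-! ### Part (i) -/

section Parts
variable {E : Type} [NormedAddCommGroup E] [NormedSpace ℝ E] [CompleteSpace E]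

omit [PosSMulStrictMono ℝ X] in
theorem parti {Y' : Type*} [NormedAddCommGroup Y'] [Lattice Y'] [HasSolidNorm Y'] [IsOrderedAddMonoid Y'] [NormedSpace ℝ Y']
    (T : X →L[ℝ] E) (U : X →L[ℝ] Y') (V : Y' →L[ℝ] E)
    (hU : IsClassD U) (hTVU : T = V.comp U) :
    IsClosed (⇑U ⁻¹' Metric.closedBall 0 1) ∧
    Convex ℝ (⇑U ⁻¹' Metric.closedBall 0 1) ∧
    IsSolid (⇑U ⁻¹' Metric.closedBall 0 1) ∧
    ∃ c : ℝ, 1 ≤ c ∧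
      c⁻¹ • (Metric.closedBall (0 : X) 1) ⊆ ⇑U ⁻¹' Metric.closedBall 0 1 ∧
      ⇑U ⁻¹' Metric.closedBall 0 1 ⊆ c • (⇑T ⁻¹' Metric.closedBall 0 1) := by
  obtain ⟨hlat, _⟩ := hU
  refine ⟨Metric.isClosed_closedBall.preimage U.continuous, ?_, ?_, ?_⟩
  · exact (convex_closedBall (0 : Y') 1).is_linear_preimage ⟨U.map_add, U.map_smul⟩
  · intro u v h hv
    rw [Set.mem_preimage, mem_closedBall_zero_iff] at hv ⊢
    have h1 : |U u| ≤ |U v| := by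
      rw [latHom_abs U hlat, latHom_abs U hlat]
      exact latHom_mono U hlat h
    exact le_trans (HasSolidNorm.solid h1) hv
  · set c : ℝ := max 1 (max ‖U‖ ‖V‖) with hc
    have hc1 : (1:ℝ) ≤ c := le_max_left _ _
    have hc0 : (0:ℝ) < c := lt_of_lt_of_le one_pos hc1
    have hcU : ‖U‖ ≤ c := le_trans (le_max_left _ _) (le_max_right _ _)
    have hcV : ‖V‖ ≤ c := le_trans (le_max_right _ _) (le_max_right _ _)
    refine ⟨c, hc1, ?_, ?_⟩
    · rintro z ⟨w, hw, rfl⟩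
      rw [mem_closedBall_zero_iff] at hw
      rw [Set.mem_preimage, mem_closedBall_zero_iff]
      have : ‖U (c⁻¹ • w)‖ ≤ c⁻¹ * (‖U‖ * ‖w‖) := by
        rw [map_smul, norm_smul, Real.norm_eq_abs, abs_of_pos (by positivity)]
        have := U.le_opNorm w
        nlinarith [inv_pos.2 hc0]
      refine le_trans this ?_
      rw [inv_mul_le_iff₀ hc0, mul_one]
      nlinarith [norm_nonneg (U : X →L[ℝ] Y')]
    · intro x hx
      rw [Set.mem_preimage, mem_closedBall_zero_iff] at hx
      refine ⟨c⁻¹ • x, ?_, smul_inv_smul₀ hc0.ne' x⟩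
      rw [Set.mem_preimage, mem_closedBall_zero_iff]
      have hTx : T (c⁻¹ • x) = c⁻¹ • V (U x) := by
        rw [hTVU]; simp
      rw [hTx, norm_smul, Real.norm_eq_abs, abs_of_pos (by positivity)]
      have h2 : ‖V (U x)‖ ≤ ‖V‖ := by
        have := V.le_opNorm (U x)
        nlinarith [norm_nonneg (V : Y' →L[ℝ] E)]
      rw [inv_mul_le_iff₀ hc0, mul_one]
      linarith

end Parts

/-! ### Part (ii): construction -/

section PartII
variable {E : Type} [NormedAddCommGroup E] [NormedSpace ℝ E] [CompleteSpace E]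

theorem partii (T : X →L[ℝ] E) (S : Set X) (hScl : IsClosed S) (hConv : Convex ℝ S)
    (hSol : IsSolid S) {c : ℝ} (hc : 1 ≤ c)
    (hball : c⁻¹ • Metric.closedBall (0 : X) 1 ⊆ S)
    (hsub : S ⊆ c • (⇑T ⁻¹' Metric.closedBall 0 1)) :
    ∃ (Y' : BanachLat) (U : X →L[ℝ] Y') (V : Y' →L[ℝ] E),
      IsClassD U ∧ T = V.comp U ∧ ⇑U ⁻¹' Metric.closedBall 0 1 = S := by
  have hc0 : (0:ℝ) < c := lt_of_lt_of_le one_pos hc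
  have habs : Absorbent ℝ S := absorbent_nhds_zero (S_mem_nhds hc hball)
  have hbal : Balanced ℝ S := balanced_of_solid hSol
  set q : LatSeminorm X :=
    ⟨gaugeSeminorm hbal hConv habs, fun u v h => gauge_solid hSol habs h, c, hc0,
      fun x => gauge_bound hc hball x⟩ with hq
  have hqp : ∀ x : X, q.p x = gauge S x := fun x => rfl
  have hTbound : ∀ x : PreSp q, ‖T ((PreSp.mk q).symm x)‖ ≤ c * ‖x‖ := by
    intro x
    have := opnorm_le_gauge T habs hsub hc ((PreSp.mk q).symm x)
    rwa [PreSp.norm_def]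
  set T' : PreSp q →L[ℝ] E :=
    LinearMap.mkContinuous
      { toFun := fun x => T ((PreSp.mk q).symm x)
        map_add' := fun a b => map_add T a b
        map_smul' := fun r a => map_smul T r a } c hTbound with hT'
  refine ⟨⟨UniformSpace.Completion (PreSp q)⟩, CSp.canon q, CSp.extCLM q T',
    ⟨CSp.canon_latHom q, CSp.canon_denseRange q⟩, ?_, ?_⟩
  · ext x
    show T x = CSp.extCLM q T' (CSp.canon q x)
    rw [CSp.canon_apply, CSp.extCLM_coe]
    rfl
  · ext x
    rw [Set.mem_preimage, mem_closedBall_zero_iff, CSp.canon_norm, hqp]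
    constructor
    · intro h
      have := gauge_ball_eq hScl hConv hc hball
      rw [← this]; exact h
    · exact fun hx => gauge_le_one_of_mem hx

end PartII

/-! ### Part (iii): uniqueness -/

section PartIII
variable {E : Type} [NormedAddCommGroup E] [NormedSpace ℝ E] [CompleteSpace E]
variable {Y₁ : Type} [NormedAddCommGroup Y₁] [Lattice Y₁] [HasSolidNorm Y₁] [IsOrderedAddMonoid Y₁] [NormedSpace ℝ Y₁] [PosSMulStrictMono ℝ Y₁]
  [CompleteSpace Y₁]
variable {Y₂ : Type} [NormedAddCommGroup Y₂] [Lattice Y₂] [HasSolidNorm Y₂] [IsOrderedAddMonoid Y₂] [NormedSpace ℝ Y₂] [PosSMulStrictMono ℝ Y₂]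
  [CompleteSpace Y₂]

theorem partiii (T : X →L[ℝ] E)
    (U₁ : X →L[ℝ] Y₁) (V₁ : Y₁ →L[ℝ] E) (U₂ : X →L[ℝ] Y₂) (V₂ : Y₂ →L[ℝ] E)
    (hU₁ : IsClassD U₁) (hT₁ : T = V₁.comp U₁) (hU₂ : IsClassD U₂) (hT₂ : T = V₂.comp U₂)
    (hpre : ⇑U₁ ⁻¹' Metric.closedBall 0 1 = ⇑U₂ ⁻¹' Metric.closedBall 0 1) :
    ∃ ι : Y₁ ≃ₗᵢ[ℝ] Y₂, IsLatHom ⇑ι ∧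
      (∀ x : X, U₂ x = ι (U₁ x)) ∧ (∀ y : Y₁, V₁ y = V₂ (ι y)) := by
  obtain ⟨hScl, hConv, hSol, c, hc, hball, hsub⟩ := parti T U₁ V₁ hU₁ hT₁
  set S := ⇑U₁ ⁻¹' Metric.closedBall 0 1 with hS
  have hc0 : (0:ℝ) < c := lt_of_lt_of_le one_pos hc
  have habs : Absorbent ℝ S := absorbent_nhds_zero (S_mem_nhds hc hball)
  have hbal : Balanced ℝ S := balanced_of_solid hSol
  set q : LatSeminorm X :=
    ⟨gaugeSeminorm hbal hConv habs, fun u v h => gauge_solid hSol habs h, c, hc0,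
      fun x => gauge_bound hc hball x⟩ with hq
  have hn₁ : ∀ x : X, ‖U₁ x‖ = gauge S x := norm_eq_gauge U₁ habs rfl
  have hn₂ : ∀ x : X, ‖U₂ x‖ = gauge S x := norm_eq_gauge U₂ habs hpre.symm
  set W₁ : PreSp q →L[ℝ] Y₁ :=
    LinearMap.mkContinuous
      { toFun := fun x => U₁ ((PreSp.mk q).symm x)
        map_add' := fun a b => map_add U₁ a b
        map_smul' := fun r a => map_smul U₁ r a } 1
      (fun x => by rw [one_mul, PreSp.norm_def]; exact (hn₁ _).le) with hW₁
  set W₂ : PreSp q →L[ℝ] Y₂ :=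
    LinearMap.mkContinuous
      { toFun := fun x => U₂ ((PreSp.mk q).symm x)
        map_add' := fun a b => map_add U₂ a b
        map_smul' := fun r a => map_smul U₂ r a } 1
      (fun x => by rw [one_mul, PreSp.norm_def]; exact (hn₂ _).le) with hW₂
  set e₁ := CSp.extCLM q W₁ with he₁def
  set e₂ := CSp.extCLM q W₂ with he₂def
  have he₁ : ∀ x : PreSp q, e₁ ↑x = U₁ ((PreSp.mk q).symm x) := fun x => CSp.extCLM_coe q W₁ x
  have he₂ : ∀ x : PreSp q, e₂ ↑x = U₂ ((PreSp.mk q).symm x) := fun x => CSp.extCLM_coe q W₂ x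
  have hce₁ : ∀ x : X, e₁ (CSp.canon q x) = U₁ x := fun x => by
    rw [CSp.canon_apply, he₁]; rfl
  have hce₂ : ∀ x : X, e₂ (CSp.canon q x) = U₂ x := fun x => by
    rw [CSp.canon_apply, he₂]; rfl
  have hnorm₁ : ∀ a : UniformSpace.Completion (PreSp q), ‖e₁ a‖ = ‖a‖ := by
    intro a
    refine UniformSpace.Completion.induction_on a
      (isClosed_eq (continuous_norm.comp e₁.continuous) continuous_norm) fun x => ?_
    rw [he₁, hn₁, UniformSpace.Completion.norm_coe, PreSp.norm_def]
    rfl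
  have hnorm₂ : ∀ a : UniformSpace.Completion (PreSp q), ‖e₂ a‖ = ‖a‖ := by
    intro a
    refine UniformSpace.Completion.induction_on a
      (isClosed_eq (continuous_norm.comp e₂.continuous) continuous_norm) fun x => ?_
    rw [he₂, hn₂, UniformSpace.Completion.norm_coe, PreSp.norm_def]
    rfl
  set li₁ : UniformSpace.Completion (PreSp q) →ₗᵢ[ℝ] Y₁ := ⟨e₁.toLinearMap, hnorm₁⟩ with hli₁
  set li₂ : UniformSpace.Completion (PreSp q) →ₗᵢ[ℝ] Y₂ := ⟨e₂.toLinearMap, hnorm₂⟩ with hli₂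
  have surj₁ : Function.Surjective ⇑li₁ := by
    have hclosed : IsClosed (Set.range ⇑li₁) := li₁.isometry.isClosedEmbedding.isClosed_range
    intro y
    have hmem : y ∈ closure (Set.range ⇑U₁) := hU₁.2 y
    have hsubr : Set.range ⇑U₁ ⊆ Set.range ⇑li₁ := by
      rintro _ ⟨x, rfl⟩
      exact ⟨CSp.canon q x, hce₁ x⟩
    have h2 : y ∈ closure (Set.range ⇑li₁) := closure_mono hsubr hmem
    rwa [hclosed.closure_eq] at h2
  have surj₂ : Function.Surjective ⇑li₂ := by
    have hclosed : IsClosed (Set.range ⇑li₂) := li₂.isometry.isClosedEmbedding.isClosed_range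
    intro y
    have hmem : y ∈ closure (Set.range ⇑U₂) := hU₂.2 y
    have hsubr : Set.range ⇑U₂ ⊆ Set.range ⇑li₂ := by
      rintro _ ⟨x, rfl⟩
      exact ⟨CSp.canon q x, hce₂ x⟩
    have h2 : y ∈ closure (Set.range ⇑li₂) := closure_mono hsubr hmem
    rwa [hclosed.closure_eq] at h2
  set E₁ := LinearIsometryEquiv.ofSurjective li₁ surj₁ with hE₁
  set E₂ := LinearIsometryEquiv.ofSurjective li₂ surj₂ with hE₂
  set ι := E₁.symm.trans E₂ with hι
  have hE₁app : ∀ a, E₁ a = e₁ a := fun a => rfl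
  have hE₂app : ∀ a, E₂ a = e₂ a := fun a => rfl
  have hιli : ∀ a, ι (e₁ a) = e₂ a := by
    intro a
    show E₂ (E₁.symm (e₁ a)) = e₂ a
    rw [show e₁ a = E₁ a from rfl, E₁.symm_apply_apply]
    exact hE₂app a
  have hcomm : ∀ x : X, U₂ x = ι (U₁ x) := by
    intro x
    rw [← hce₁ x, hιli, hce₂ x]
  have late₁ : ∀ a b : UniformSpace.Completion (PreSp q), e₁ (a ⊔ b) = e₁ a ⊔ e₁ b := by
    intro a b
    refine UniformSpace.Completion.induction_on₂ a b
      (isClosed_eq (e₁.continuous.comp (CSp.continuous_sup₂ continuous_fst continuous_snd))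
        ((e₁.continuous.comp continuous_fst).sup (e₁.continuous.comp continuous_snd)))
      fun x y => ?_
    rw [← CSp.coe_sup, he₁, he₁, he₁]
    exact hU₁.1 _ _
  have late₂ : ∀ a b : UniformSpace.Completion (PreSp q), e₂ (a ⊔ b) = e₂ a ⊔ e₂ b := by
    intro a b
    refine UniformSpace.Completion.induction_on₂ a b
      (isClosed_eq (e₂.continuous.comp (CSp.continuous_sup₂ continuous_fst continuous_snd))
        ((e₂.continuous.comp continuous_fst).sup (e₂.continuous.comp continuous_snd)))
      fun x y => ?_
    rw [← CSp.coe_sup, he₂, he₂, he₂]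
    exact hU₂.1 _ _
  refine ⟨ι, ?_, hcomm, ?_⟩
  · intro a b
    obtain ⟨u, rfl⟩ := surj₁ a
    obtain ⟨v, rfl⟩ := surj₁ b
    calc ι (li₁ u ⊔ li₁ v) = ι (e₁ (u ⊔ v)) := by
          rw [show (li₁ u : Y₁) = e₁ u from rfl, show (li₁ v : Y₁) = e₁ v from rfl, ← late₁]
      _ = e₂ (u ⊔ v) := hιli _
      _ = e₂ u ⊔ e₂ v := late₂ u v
      _ = ι (li₁ u) ⊔ ι (li₁ v) := by
          rw [show (li₁ u : Y₁) = e₁ u from rfl, show (li₁ v : Y₁) = e₁ v from rfl,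
            hιli, hιli]
  · have heq : ⇑V₁ = ⇑V₂ ∘ ⇑ι := by
      refine hU₁.2.equalizer V₁.continuous (V₂.continuous.comp ι.toIsometryEquiv.continuous) ?_
      funext x
      show V₁ (U₁ x) = V₂ (ι (U₁ x))
      rw [← hcomm x]
      calc V₁ (U₁ x) = T x := by rw [hT₁]; rfl
        _ = V₂ (U₂ x) := by rw [hT₂]; rfl
    intro y
    exact congrFun heq y

end PartIII

/-- Correspondence between Class 𝒟 factorizations of a nonzero operator
`T : X → E` and closed convex solid subsets `S` of `X` with
`c⁻¹ • B_X ⊆ S ⊆ c • T⁻¹(B_E)` for some `c ≥ 1`. -/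
theorem classD_factorization_correspondence
    {X : Type} [NormedAddCommGroup X] [Lattice X] [HasSolidNorm X] [IsOrderedAddMonoid X] [NormedSpace ℝ X] [PosSMulStrictMono ℝ X]
    [CompleteSpace X]
    {E : Type} [NormedAddCommGroup E] [NormedSpace ℝ E] [CompleteSpace E]
    (T : X →L[ℝ] E) (hT : T ≠ 0)
    {Y : Type} [NormedAddCommGroup Y] [Lattice Y] [HasSolidNorm Y] [IsOrderedAddMonoid Y] [NormedSpace ℝ Y] [PosSMulStrictMono ℝ Y]
    [CompleteSpace Y]
    {Y₁ : Type} [NormedAddCommGroup Y₁] [Lattice Y₁] [HasSolidNorm Y₁] [IsOrderedAddMonoid Y₁] [NormedSpace ℝ Y₁] [PosSMulStrictMono ℝ Y₁]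
    [CompleteSpace Y₁]
    {Y₂ : Type} [NormedAddCommGroup Y₂] [Lattice Y₂] [HasSolidNorm Y₂] [IsOrderedAddMonoid Y₂] [NormedSpace ℝ Y₂] [PosSMulStrictMono ℝ Y₂]
    [CompleteSpace Y₂] :
    -- (i)
    (∀ (U : X →L[ℝ] Y) (V : Y →L[ℝ] E), IsClassD U → T = V.comp U →
      IsClosed (⇑U ⁻¹' Metric.closedBall 0 1) ∧
      Convex ℝ (⇑U ⁻¹' Metric.closedBall 0 1) ∧
      IsSolid (⇑U ⁻¹' Metric.closedBall 0 1) ∧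
      ∃ c : ℝ, 1 ≤ c ∧
        c⁻¹ • (Metric.closedBall (0 : X) 1) ⊆ ⇑U ⁻¹' Metric.closedBall 0 1 ∧
        ⇑U ⁻¹' Metric.closedBall 0 1 ⊆ c • (⇑T ⁻¹' Metric.closedBall 0 1)) ∧
    -- (ii)
    (∀ S : Set X, IsClosed S → Convex ℝ S → IsSolid S →
      (∃ c : ℝ, 1 ≤ c ∧ c⁻¹ • (Metric.closedBall (0 : X) 1) ⊆ S ∧
        S ⊆ c • (⇑T ⁻¹' Metric.closedBall 0 1)) →
      ∃ (Y' : BanachLat) (U : X →L[ℝ] Y') (V : Y' →L[ℝ] E),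
        IsClassD U ∧ T = V.comp U ∧ ⇑U ⁻¹' Metric.closedBall 0 1 = S) ∧
    -- (iii)
    (∀ (U₁ : X →L[ℝ] Y₁) (V₁ : Y₁ →L[ℝ] E) (U₂ : X →L[ℝ] Y₂) (V₂ : Y₂ →L[ℝ] E),
      IsClassD U₁ → T = V₁.comp U₁ → IsClassD U₂ → T = V₂.comp U₂ →
      ⇑U₁ ⁻¹' Metric.closedBall 0 1 = ⇑U₂ ⁻¹' Metric.closedBall 0 1 →
      ∃ ι : Y₁ ≃ₗᵢ[ℝ] Y₂, IsLatHom ⇑ι ∧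
        (∀ x : X, U₂ x = ι (U₁ x)) ∧ (∀ y : Y₁, V₁ y = V₂ (ι y))) := by
  refine ⟨?_, ?_, ?_⟩
  · intro U V hU hTVU
    exact parti T U V hU hTVU
  · rintro S hScl hConv hSol ⟨c, hc, hball, hsub⟩
    exact partii T S hScl hConv hSol hc hball hsub
  · intro U₁ V₁ U₂ V₂ h1 h2 h3 h4 h5
    exact partiii T U₁ V₁ U₂ V₂ h1 h2 h3 h4 h5

end
end
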